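/- arXiv:math/0501077 — 2 statements merged into one kernel-verified Lean document; each statement's English description precedes it below -/
import Mathlib

section
/- Let X be a compact metric space, r : X → X continuous, surjective, finite-to-one, and W : X → [0,∞) measurable with R_W 1 = 1. Let x₀ ∈ X be a fixed point of r (x₀ ∈ r⁻¹(x₀)) with W(x₀) = 1, and define h_{x₀}(x) = P_x(N_{x₀}(x)), where N_{x₀}(x) = {(z_n)_{n≥1} ∈ Ω_x : lim_{n→∞} z_n = x₀}. Then: (a) R_W h_{x₀} = h_{x₀}, 0 ≤ h_{x₀} ≤ 1, and h_{x₀}(x₀) = 1; (b) if h is any nonnegative function with R_W h = h, h(x₀) = 1, and h continuous at x₀, then h_{x₀} ≤ h pointwise. -/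
open MeasureTheory Filter Topology

/-- A path starting at `x`: a sequence `z 0, z 1, z 2, …` (representing `z_1, z_2, …`)
with `r (z 0) = x` and `r (z (n+1)) = z n`. -/
def IsPathFrom {X : Type*} (r : X → X) (x : X) (z : ℕ → X) : Prop :=
  r (z 0) = x ∧ ∀ n, r (z (n + 1)) = z n

/-- The cylinder of paths starting at `x` whose first `n` entries agree with `z`. -/
def pathCylinder {X : Type*} (r : X → X) (x : X) (z : ℕ → X) (n : ℕ) : Set (ℕ → X) :=
  {w | IsPathFrom r x w ∧ ∀ i < n, w i = z i}

/-- The Ruelle transfer operator `R_W f (x) = ∑_{y ∈ r⁻¹(x)} W(y) f(y)`. -/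
noncomputable def RuelleOp {X : Type*} (r : X → X) (W : X → ℝ) (f : X → ℝ) (x : X) : ℝ :=
  ∑ᶠ y ∈ r ⁻¹' {x}, W y * f y

/-- `N_{x₀}(x)`: the set of paths starting at `x` converging to `x₀`. -/
def pathsTo {X : Type*} [MetricSpace X] (r : X → X) (x₀ x : X) : Set (ℕ → X) :=
  {z | IsPathFrom r x z ∧ Filter.Tendsto z Filter.atTop (nhds x₀)}

set_option linter.unusedSectionVars false

namespace Stmt16Aux

def shiftSeq {X : Type*} (w : ℕ → X) : ℕ → X := fun n => w (n + 1)

def consSeq {X : Type*} (y : X) (u : ℕ → X) : ℕ → X := fun n =>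
  match n with
  | 0 => y
  | n + 1 => u n

def OmegaSet {X : Type*} (r : X → X) (x : X) : Set (ℕ → X) := {w | IsPathFrom r x w}

def cylSet {X : Type*} (r : X → X) (x : X) : Set (Set (ℕ → X)) :=
  {s | ∃ z n, s = pathCylinder r x z n}

def cylSA {X : Type*} (r : X → X) (x : X) : MeasurableSpace (ℕ → X) :=
  .generateFrom (cylSet r x)

def truncFun {X : Type*} (n : ℕ) (w : ℕ → X) : ℕ → X := fun i => if i ≤ n then w i else w n

variable {X : Type*} {r : X → X} {x y : X} {w u : ℕ → X}

lemma isPathFrom_shift (h : IsPathFrom r x w) : IsPathFrom r (w 0) (shiftSeq w) :=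
  ⟨h.2 0, fun n => h.2 (n + 1)⟩

lemma isPathFrom_cons (hy : r y = x) (hu : IsPathFrom r y u) :
    IsPathFrom r x (consSeq y u) := by
  refine ⟨hy, fun n => ?_⟩
  cases n with
  | zero => exact hu.1
  | succ k => exact hu.2 k

lemma isPathFrom_of_shift (hy : r y = x) (hw0 : w 0 = y)
    (hs : IsPathFrom r y (shiftSeq w)) : IsPathFrom r x w := by
  refine ⟨by rw [hw0]; exact hy, fun n => ?_⟩
  cases n with
  | zero => rw [hw0]; exact hs.1
  | succ k => exact hs.2 k

lemma exists_path (hr_surj : Function.Surjective r) (hy : r y = x) :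
    ∃ z, IsPathFrom r x z ∧ z 0 = y := by
  refine ⟨fun n => (Function.surjInv hr_surj)^[n] y, ⟨by simpa using hy, fun n => ?_⟩, rfl⟩
  show r ((Function.surjInv hr_surj)^[n+1] y) = (Function.surjInv hr_surj)^[n] y
  rw [Function.iterate_succ_apply']
  exact Function.surjInv_eq hr_surj _

lemma iterFin (hr_fin : ∀ x : X, (r ⁻¹' {x}).Finite) :
    ∀ (n : ℕ) (x : X), ((r^[n]) ⁻¹' {x}).Finite := by
  intro n
  induction n with
  | zero => intro x; simp
  | succ n ih =>
      intro x
      have h1 : (r^[n+1]) ⁻¹' {x} = r ⁻¹' ((r^[n]) ⁻¹' {x}) := by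
        rw [Function.iterate_succ]; rfl
      have h2 : r ⁻¹' ((r^[n]) ⁻¹' {x}) = ⋃ v ∈ (r^[n]) ⁻¹' {x}, r ⁻¹' {v} := by
        ext a; simp
      rw [h1, h2]
      exact Set.Finite.biUnion (ih x) fun v _ => hr_fin v

lemma path_iter (h : IsPathFrom r x w) : ∀ n, (r^[n+1]) (w n) = x := by
  intro n
  induction n with
  | zero => simpa using h.1
  | succ n ih =>
      rw [Function.iterate_succ_apply]
      rw [h.2 n]
      exact ih

end Stmt16Aux

namespace Stmt16Aux
variable {X : Type*} [MetricSpace X] [CompactSpace X] [MeasurableSpace X] [BorelSpace X]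
variable {r : X → X} {x y x₀ : X} {w u : ℕ → X}

lemma omega_measurableSet (hr_cont : Continuous r) (x : X) :
    MeasurableSet (OmegaSet r x) := by
  have h0 : MeasurableSet {w : ℕ → X | r (w 0) = x} := by
    have : {w : ℕ → X | r (w 0) = x} = (fun w : ℕ → X => r (w 0)) ⁻¹' {x} := rfl
    rw [this]
    exact (hr_cont.measurable.comp (measurable_pi_apply 0)) (measurableSet_singleton x)
  have h1 : ∀ n : ℕ, MeasurableSet {w : ℕ → X | r (w (n+1)) = w n} := by
    intro n
    have : {w : ℕ → X | r (w (n+1)) = w n}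
        = (fun w : ℕ → X => dist (r (w (n+1))) (w n)) ⁻¹' {0} := by
      ext w; simp [dist_eq_zero]
    rw [this]
    exact ((hr_cont.measurable.comp (measurable_pi_apply _)).dist (measurable_pi_apply _))
      (measurableSet_singleton 0)
  have : OmegaSet r x = {w : ℕ → X | r (w 0) = x} ∩ ⋂ n, {w : ℕ → X | r (w (n+1)) = w n} := by
    ext w
    simp only [OmegaSet, Set.mem_setOf_eq, Set.mem_inter_iff, Set.mem_iInter, IsPathFrom]
  rw [this]
  exact h0.inter (MeasurableSet.iInter h1)

lemma cyl_measurableSet (hr_cont : Continuous r) (x : X) (z : ℕ → X) (n : ℕ) :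
    MeasurableSet (pathCylinder r x z n) := by
  have : pathCylinder r x z n
      = OmegaSet r x ∩ ⋂ i ∈ Finset.range n, (fun w : ℕ → X => w i) ⁻¹' {z i} := by
    ext w
    simp only [pathCylinder, Set.mem_setOf_eq, Set.mem_inter_iff, Set.mem_iInter,
      Finset.mem_range, Set.mem_preimage, Set.mem_singleton_iff, OmegaSet]
  rw [this]
  exact (omega_measurableSet hr_cont x).inter
    (MeasurableSet.biInter (Set.to_countable _)
      fun i _ => (measurable_pi_apply i) (measurableSet_singleton (z i)))

lemma cylSA_le (hr_cont : Continuous r) (x : X) :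
    cylSA r x ≤ (inferInstance : MeasurableSpace (ℕ → X)) := by
  apply MeasurableSpace.generateFrom_le
  rintro s ⟨z, n, rfl⟩
  exact cyl_measurableSet hr_cont x z n

lemma cyl_inter_of_le {z z' : ℕ → X} {n m : ℕ} (hnm : n ≤ m)
    (hne : (pathCylinder r x z n ∩ pathCylinder r x z' m).Nonempty) :
    pathCylinder r x z n ∩ pathCylinder r x z' m = pathCylinder r x z' m := by
  obtain ⟨v, ⟨hv1, hv2⟩, hv3, hv4⟩ := hne
  apply Set.inter_eq_self_of_subset_right
  rintro w ⟨hw1, hw2⟩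
  exact And.intro hw1 fun i hi => by
    rw [hw2 i (lt_of_lt_of_le hi hnm), ← hv4 i (lt_of_lt_of_le hi hnm), hv2 i hi]

lemma isPiSystem_cylSet : IsPiSystem (cylSet r x) := by
  rintro s ⟨z, n, rfl⟩ t ⟨z', m, rfl⟩ hne
  rcases le_total n m with hnm | hmn
  · rw [cyl_inter_of_le hnm hne]
    exact ⟨z', m, rfl⟩
  · rw [Set.inter_comm] at hne ⊢
    rw [cyl_inter_of_le hmn hne]
    exact ⟨z, n, rfl⟩

lemma trunc_finite (hr_fin : ∀ x : X, (r ⁻¹' {x}).Finite) (x : X) (n : ℕ) (B : Set X) :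
    (truncFun n '' (OmegaSet r x ∩ {w | w n ∈ B})).Finite := by
  set φ : (ℕ → X) → (Fin (n+1) → X) := fun p i => p i with hφ
  have himg : (φ '' (truncFun n '' (OmegaSet r x ∩ {w | w n ∈ B}))).Finite := by
    apply Set.Finite.subset (Set.Finite.pi (t := fun i : Fin (n+1) => (r^[(i:ℕ)+1]) ⁻¹' {x})
      (fun i => iterFin hr_fin _ x))
    rintro f ⟨p, ⟨w, ⟨hw, -⟩, rfl⟩, rfl⟩
    intro i _
    have hile : (i : ℕ) ≤ n := Nat.lt_succ_iff.mp i.isLt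
    have : φ (truncFun n w) i = w (i : ℕ) := by
      simp only [hφ, truncFun, if_pos hile]
    rw [this]
    exact path_iter hw (i : ℕ)
  apply Set.Finite.of_finite_image himg
  rintro p ⟨w, -, rfl⟩ q ⟨w', -, rfl⟩ hpq
  funext i
  rcases le_or_gt i n with hi | hi
  · have := congrFun hpq ⟨i, Nat.lt_succ_of_le hi⟩
    simpa [hφ] using this
  · have := congrFun hpq ⟨n, Nat.lt_succ_self n⟩
    simp only [hφ] at this
    simp only [truncFun, if_neg (not_le.mpr hi), if_pos (le_refl n)] at *
    simpa using this

lemma coordSet_mem (hr_fin : ∀ x : X, (r ⁻¹' {x}).Finite) (x : X) (n : ℕ) (B : Set X) :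
    MeasurableSet[cylSA r x] (OmegaSet r x ∩ {w | w n ∈ B}) := by
  have hT := trunc_finite (r := r) hr_fin x n B
  have hset : OmegaSet r x ∩ {w | w n ∈ B}
      = ⋃ p ∈ truncFun n '' (OmegaSet r x ∩ {w | w n ∈ B}), pathCylinder r x p (n+1) := by
    ext w
    constructor
    · rintro ⟨hw, hwB⟩
      refine Set.mem_biUnion ⟨w, ⟨hw, hwB⟩, rfl⟩ (And.intro hw fun i hi => ?_)
      simp only [truncFun, if_pos (Nat.lt_succ_iff.mp hi)]
    · intro hmem
      rw [Set.mem_iUnion₂] at hmem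
      obtain ⟨p, ⟨w', ⟨hw', hw'B⟩, rfl⟩, hw, hcoord⟩ := hmem
      refine And.intro hw ?_
      have := hcoord n (Nat.lt_succ_self n)
      simp only [truncFun, if_pos (le_refl n)] at this
      show w n ∈ B
      rw [this]; exact hw'B
  rw [hset]
  exact MeasurableSet.biUnion hT.countable
    fun p _ => MeasurableSpace.measurableSet_generateFrom ⟨p, n+1, rfl⟩

lemma omega_mem (hr_fin : ∀ x : X, (r ⁻¹' {x}).Finite) (x : X) :
    MeasurableSet[cylSA r x] (OmegaSet r x) := by
  have := coordSet_mem (r := r) hr_fin x 0 Set.univ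
  simpa using this

lemma pathsTo_mem (hr_fin : ∀ x : X, (r ⁻¹' {x}).Finite) (x₀ x : X) :
    MeasurableSet[cylSA r x] (pathsTo r x₀ x) := by
  have hset : pathsTo r x₀ x = ⋂ k : ℕ, ⋃ N : ℕ, ⋂ n ∈ Set.Ici N,
      (OmegaSet r x ∩ {w | w n ∈ Metric.ball x₀ (1/((k:ℝ)+1))}) := by
    ext w
    constructor
    · rintro ⟨hw, ht⟩
      simp only [Set.mem_iInter, Set.mem_iUnion, Set.mem_Ici]
      intro k
      obtain ⟨N, hN⟩ := (Metric.tendsto_atTop).mp ht (1/((k:ℝ)+1)) (by positivity)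
      exact ⟨N, fun n hn => ⟨hw, Metric.mem_ball.mpr (hN n hn)⟩⟩
    · intro hmem
      simp only [Set.mem_iInter, Set.mem_iUnion, Set.mem_Ici] at hmem
      obtain ⟨N₀, hN₀⟩ := hmem 0
      refine ⟨(hN₀ N₀ le_rfl).1, Metric.tendsto_atTop.mpr fun ε hε => ?_⟩
      obtain ⟨k, hk⟩ := exists_nat_one_div_lt hε
      obtain ⟨N, hN⟩ := hmem k
      exact ⟨N, fun n hn => lt_trans (Metric.mem_ball.mp (hN n hn).2) hk⟩
  rw [hset]
  exact MeasurableSet.iInter fun k => MeasurableSet.iUnion fun N =>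
    MeasurableSet.biInter (Set.to_countable _) fun n _ => coordSet_mem hr_fin x n _

end Stmt16Aux

namespace Stmt16Aux
section Meas
variable {X : Type*} [MetricSpace X] [CompactSpace X] [MeasurableSpace X] [BorelSpace X]
variable {r : X → X} {W : X → ℝ} {P : X → Measure (ℕ → X)}
variable (hr_cont : Continuous r) (hr_surj : Function.Surjective r)
variable (hr_fin : ∀ x : X, (r ⁻¹' {x}).Finite)
variable (hP_prob : ∀ x, IsProbabilityMeasure (P x))
variable (hP_cyl : ∀ (x : X) (z : ℕ → X) (n : ℕ), IsPathFrom r x z →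
      P x (pathCylinder r x z n) = ∏ i ∈ Finset.range n, ENNReal.ofReal (W (z i)))

lemma measurable_shiftSeq : Measurable (shiftSeq : (ℕ → X) → (ℕ → X)) :=
  measurable_pi_lambda _ fun n => measurable_pi_apply (n + 1)

lemma measurable_w0 (y : X) : MeasurableSet {w : ℕ → X | w 0 = y} := by
  have : {w : ℕ → X | w 0 = y} = (fun w : ℕ → X => w 0) ⁻¹' {y} := rfl
  rw [this]
  exact (measurable_pi_apply 0) (measurableSet_singleton y)

include hr_surj hP_cyl in
lemma omega_meas_one (x : X) : P x (OmegaSet r x) = 1 := by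
  obtain ⟨y, hy⟩ := hr_surj x
  obtain ⟨z, hz, -⟩ := exists_path hr_surj hy
  have : OmegaSet r x = pathCylinder r x z 0 := by
    ext w; simp [OmegaSet, pathCylinder]
  rw [this, hP_cyl x z 0 hz]
  simp

include hr_cont hr_surj hP_prob hP_cyl in
lemma measure_inter_omega (x : X) (s : Set (ℕ → X)) :
    P x s = P x (s ∩ OmegaSet r x) := by
  have := hP_prob x
  refine le_antisymm ?_ (measure_mono Set.inter_subset_left)
  have hc : P x (OmegaSet r x)ᶜ = 0 := by
    rw [measure_compl (omega_measurableSet hr_cont x) (measure_ne_top _ _),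
      omega_meas_one hr_surj hP_cyl, measure_univ, tsub_self]
  calc P x s ≤ P x ((s ∩ OmegaSet r x) ∪ (OmegaSet r x)ᶜ) := by
        apply measure_mono
        intro w hw
        by_cases h : w ∈ OmegaSet r x
        · exact Or.inl ⟨hw, h⟩
        · exact Or.inr h
    _ ≤ P x (s ∩ OmegaSet r x) + P x (OmegaSet r x)ᶜ := measure_union_le _ _
    _ = P x (s ∩ OmegaSet r x) := by rw [hc, add_zero]

include hr_cont hr_surj hP_prob hP_cyl in
lemma w0_meas {x y : X} (hy : r y = x) :
    P x {w : ℕ → X | w 0 = y} = ENNReal.ofReal (W y) := by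
  obtain ⟨z, hz, hz0⟩ := exists_path hr_surj hy
  have hset : {w : ℕ → X | w 0 = y} ∩ OmegaSet r x = pathCylinder r x z 1 := by
    ext w
    simp only [Set.mem_inter_iff, Set.mem_setOf_eq, pathCylinder, OmegaSet]
    constructor
    · rintro ⟨h0, hw⟩
      exact And.intro hw fun i hi => by
        interval_cases i
        rw [h0, hz0]
    · rintro ⟨hw, hcoord⟩
      refine ⟨?_, hw⟩
      rw [hcoord 0 one_pos, hz0]
  rw [measure_inter_omega hr_cont hr_surj hP_prob hP_cyl, hset, hP_cyl x z 1 hz,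
    Finset.prod_range_one, hz0]

include hr_cont hr_surj hP_prob hP_cyl in
lemma markov {x y : X} (hy : r y = x) {A : Set (ℕ → X)}
    (hA : MeasurableSet[cylSA r y] A) :
    P x ({w : ℕ → X | w 0 = y} ∩ shiftSeq ⁻¹' A) = ENNReal.ofReal (W y) * P y A := by
  have hprobx := hP_prob x
  have hproby := hP_prob y
  refine MeasurableSpace.induction_on_inter (m := cylSA r y)
    (C := fun A _ => P x ({w : ℕ → X | w 0 = y} ∩ shiftSeq ⁻¹' A)
      = ENNReal.ofReal (W y) * P y A)
    (s := cylSet r y) rfl isPiSystem_cylSet (by simp) ?_ ?_ ?_ _ hA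
  · -- basic
    rintro t ⟨z, m, rfl⟩
    rcases Set.eq_empty_or_nonempty (pathCylinder r y z m) with he | ⟨u, hu_path, hu_agree⟩
    · rw [he]; simp
    · have hcyl_eq : pathCylinder r y z m = pathCylinder r y u m := by
        ext v
        simp only [pathCylinder, Set.mem_setOf_eq]
        constructor
        · rintro ⟨h1, h2⟩
          exact And.intro h1 fun i hi => by rw [h2 i hi, ← hu_agree i hi]
        · rintro ⟨h1, h2⟩
          exact And.intro h1 fun i hi => by rw [h2 i hi, hu_agree i hi]
      have hset : {w : ℕ → X | w 0 = y} ∩ shiftSeq ⁻¹' (pathCylinder r y z m)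
          = pathCylinder r x (consSeq y u) (m + 1) := by
        ext w
        simp only [Set.mem_inter_iff, Set.mem_setOf_eq, Set.mem_preimage, pathCylinder]
        constructor
        · rintro ⟨hw0, hsp, hscoord⟩
          refine And.intro (isPathFrom_of_shift hy hw0 hsp) fun i hi => ?_
          cases i with
          | zero => exact hw0
          | succ j =>
              have hj : j < m := Nat.lt_of_succ_lt_succ hi
              show w (j + 1) = u j
              have : shiftSeq w j = z j := hscoord j hj
              rw [show w (j + 1) = shiftSeq w j from rfl, this, ← hu_agree j hj]
        · rintro ⟨hwp, hwcoord⟩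
          have hw0 : w 0 = y := hwcoord 0 (Nat.succ_pos m)
          refine ⟨hw0, And.intro ⟨?_, fun n => hwp.2 (n + 1)⟩ fun i hi => ?_⟩
          · show r (w 1) = y
            rw [hwp.2 0, hw0]
          · show w (i + 1) = z i
            rw [hwcoord (i + 1) (Nat.succ_lt_succ hi), ← hu_agree i hi]
            rfl
      rw [hset, hP_cyl x (consSeq y u) (m + 1) (isPathFrom_cons hy hu_path),
        Finset.prod_range_succ', hcyl_eq, hP_cyl y u m hu_path, mul_comm]
      rfl
  · -- compl
    intro t ht ih
    have htm : MeasurableSet t := cylSA_le hr_cont y t ht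
    have h1 : P x ({w : ℕ → X | w 0 = y} ∩ shiftSeq ⁻¹' t)
        + P x ({w : ℕ → X | w 0 = y} ∩ shiftSeq ⁻¹' tᶜ) = P x {w : ℕ → X | w 0 = y} := by
      rw [Set.preimage_compl, ← measure_union
        (disjoint_compl_right.mono Set.inter_subset_right Set.inter_subset_right)
        ((measurable_w0 y).inter (measurable_shiftSeq htm).compl),
        Set.inter_union_compl]
    rw [ih, w0_meas hr_cont hr_surj hP_prob hP_cyl hy] at h1
    have h3 : ENNReal.ofReal (W y) * P y t + ENNReal.ofReal (W y) * P y tᶜ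
        = ENNReal.ofReal (W y) := by
      rw [← mul_add, measure_add_measure_compl htm, measure_univ, mul_one]
    have h4 : ENNReal.ofReal (W y) * P y t + P x ({w : ℕ → X | w 0 = y} ∩ shiftSeq ⁻¹' tᶜ)
        = ENNReal.ofReal (W y) * P y t + ENNReal.ofReal (W y) * P y tᶜ := h1.trans h3.symm
    exact (ENNReal.add_right_inj
      (ENNReal.mul_ne_top ENNReal.ofReal_ne_top (measure_ne_top _ _))).mp h4
  · -- iUnion
    intro f hdisj hmeas ih
    have hmeas' : ∀ i, MeasurableSet (f i) := fun i => cylSA_le hr_cont y _ (hmeas i)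
    rw [Set.preimage_iUnion, Set.inter_iUnion,
      measure_iUnion (fun i j hij => ((hdisj hij).preimage _).mono
        Set.inter_subset_right Set.inter_subset_right)
        (fun i => (measurable_w0 y).inter (measurable_shiftSeq (hmeas' i))),
      measure_iUnion hdisj hmeas', ← ENNReal.tsum_mul_left]
    exact tsum_congr ih

include hr_cont hr_surj hP_prob hP_cyl hr_fin in
lemma decomp (x : X) (S : X → Set (ℕ → X))
    (hS : ∀ y, r y = x → MeasurableSet[cylSA r y] (S y)) :
    P x (⋃ y ∈ r ⁻¹' {x}, ({w : ℕ → X | w 0 = y} ∩ shiftSeq ⁻¹' (S y)))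
      = ∑ y ∈ (hr_fin x).toFinset, ENNReal.ofReal (W y) * P y (S y) := by
  have hre : (⋃ y ∈ r ⁻¹' {x}, ({w : ℕ → X | w 0 = y} ∩ shiftSeq ⁻¹' (S y)))
      = ⋃ y ∈ (hr_fin x).toFinset, ({w : ℕ → X | w 0 = y} ∩ shiftSeq ⁻¹' (S y)) := by
    ext w; simp [Set.Finite.mem_toFinset]
  rw [hre, measure_biUnion_finset ?_ ?_]
  · refine Finset.sum_congr rfl fun y hy => ?_
    have hyx : r y = x := by simpa using (hr_fin x).mem_toFinset.mp hy
    exact markov hr_cont hr_surj hP_prob hP_cyl hyx (hS y hyx)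
  · intro a _ b _ hab
    refine Set.disjoint_left.mpr ?_
    rintro w ⟨(h1 : w 0 = a), -⟩ ⟨(h2 : w 0 = b), -⟩
    exact hab (h1 ▸ h2 ▸ rfl)
  · intro b hb
    have hbx : r b = x := by simpa using (hr_fin x).mem_toFinset.mp hb
    exact (measurable_w0 b).inter (measurable_shiftSeq (cylSA_le hr_cont b _ (hS b hbx)))

end Meas
end Stmt16Aux

open Stmt16Aux in
theorem stmt16
    {X : Type*} [MetricSpace X] [CompactSpace X] [MeasurableSpace X] [BorelSpace X]
    (r : X → X) (hr_cont : Continuous r) (hr_surj : Function.Surjective r)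
    (hr_fin : ∀ x : X, (r ⁻¹' {x}).Finite)
    (W : X → ℝ) (hW_meas : Measurable W) (hW_nonneg : ∀ x, 0 ≤ W x)
    (hW1 : ∀ x : X, (∑ᶠ y ∈ r ⁻¹' {x}, W y) = 1)
    -- the family of Kolmogorov path-space measures `P_x`
    (P : X → Measure (ℕ → X)) (hP_prob : ∀ x, IsProbabilityMeasure (P x))
    (hP_cyl : ∀ (x : X) (z : ℕ → X) (n : ℕ), IsPathFrom r x z →
      P x (pathCylinder r x z n) = ∏ i ∈ Finset.range n, ENNReal.ofReal (W (z i)))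
    -- `x₀` is a fixed point of `r` with `W x₀ = 1`
    (x₀ : X) (hx₀ : r x₀ = x₀) (hWx₀ : W x₀ = 1) :
    -- with `h_{x₀}(x) := P_x(N_{x₀}(x))`:
    letI h : X → ℝ := fun x => (P x (pathsTo r x₀ x)).toReal
    -- (a) `h_{x₀}` is harmonic, `0 ≤ h_{x₀} ≤ 1`, and `h_{x₀}(x₀) = 1`
    (∀ x, RuelleOp r W h x = h x) ∧
    (∀ x, 0 ≤ h x ∧ h x ≤ 1) ∧
    h x₀ = 1 ∧
    -- (b) minimality of `h_{x₀}`
    (∀ g : X → ℝ, (∀ x, 0 ≤ g x) → (∀ x, RuelleOp r W g x = g x) →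
      g x₀ = 1 → ContinuousAt g x₀ → ∀ x, h x ≤ g x) := by
  classical
  have ruelle_eq_sum : ∀ (f : X → ℝ) (x : X),
      RuelleOp r W f x = ∑ y ∈ (hr_fin x).toFinset, W y * f y := by
    intro f x
    rw [RuelleOp, finsum_mem_eq_finite_toFinset_sum _ (hr_fin x)]
  -- decomposition of pathsTo
  have pathsTo_decomp : ∀ x : X, pathsTo r x₀ x
      = ⋃ y ∈ r ⁻¹' {x}, ({w : ℕ → X | w 0 = y} ∩ shiftSeq ⁻¹' (pathsTo r x₀ y)) := by
    intro x
    ext w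
    constructor
    · rintro ⟨hp, ht⟩
      refine Set.mem_biUnion (show w 0 ∈ r ⁻¹' {x} from hp.1) ⟨rfl, isPathFrom_shift hp, ?_⟩
      exact (tendsto_add_atTop_iff_nat 1).mpr ht
    · intro hmem
      rw [Set.mem_iUnion₂] at hmem
      obtain ⟨y, hy, hw0, hsp, hst⟩ := hmem
      refine ⟨isPathFrom_of_shift hy hw0 hsp, ?_⟩
      have hst' : Tendsto (fun n => w (n + 1)) atTop (𝓝 x₀) := hst
      exact (tendsto_add_atTop_iff_nat 1).mp hst'
  have hdec : ∀ x : X, P x (pathsTo r x₀ x)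
      = ∑ y ∈ (hr_fin x).toFinset, ENNReal.ofReal (W y) * P y (pathsTo r x₀ y) := by
    intro x
    rw [pathsTo_decomp x]
    exact decomp hr_cont hr_surj hr_fin hP_prob hP_cyl x _ (fun y _ => pathsTo_mem hr_fin x₀ y)
  refine ⟨?_, ?_, ?_, ?_⟩
  · -- harmonicity
    intro x
    rw [ruelle_eq_sum]
    have hterm : ∀ y ∈ (hr_fin x).toFinset,
        W y * (P y (pathsTo r x₀ y)).toReal
          = (ENNReal.ofReal (W y) * P y (pathsTo r x₀ y)).toReal := fun y _ => by
      rw [ENNReal.toReal_mul, ENNReal.toReal_ofReal (hW_nonneg y)]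
    rw [Finset.sum_congr rfl hterm,
      ← ENNReal.toReal_sum
        (fun y _ => ENNReal.mul_ne_top ENNReal.ofReal_ne_top (measure_ne_top _ _)),
      ← hdec x]
  · -- bounds
    intro x
    have := hP_prob x
    refine ⟨ENNReal.toReal_nonneg, ?_⟩
    exact ENNReal.toReal_le_of_le_ofReal zero_le_one (by simpa using prob_le_one)
  · -- h x₀ = 1
    have := hP_prob x₀
    set c : ℕ → X := fun _ => x₀ with hcdef
    have hc : IsPathFrom r x₀ c := ⟨hx₀, fun _ => hx₀⟩
    have h1 : ∀ n, P x₀ (pathCylinder r x₀ c n) = 1 := fun n => by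
      rw [hP_cyl _ _ _ hc]; simp [hcdef, hWx₀]
    have hcompl : ∀ n : ℕ, P x₀ (pathCylinder r x₀ c n)ᶜ = 0 := fun n => by
      rw [measure_compl (cyl_measurableSet hr_cont x₀ c n) (measure_ne_top _ _), h1 n,
        measure_univ, tsub_self]
    have hsub : (⋂ n, pathCylinder r x₀ c n) ⊆ pathsTo r x₀ x₀ := by
      intro w hw
      rw [Set.mem_iInter] at hw
      have hcoord : ∀ i, w i = x₀ := fun i => (hw (i+1)).2 i (Nat.lt_succ_self i)
      have hwc : w = c := funext hcoord
      rw [hwc]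
      exact ⟨hc, tendsto_const_nhds⟩
    have hone : P x₀ (pathsTo r x₀ x₀) = 1 := by
      rw [← prob_compl_eq_zero_iff (cylSA_le hr_cont x₀ _ (pathsTo_mem hr_fin x₀ x₀))]
      refine measure_mono_null ?_ (measure_iUnion_null hcompl)
      calc (pathsTo r x₀ x₀)ᶜ ⊆ (⋂ n, pathCylinder r x₀ c n)ᶜ := Set.compl_subset_compl.mpr hsub
        _ = ⋃ n, (pathCylinder r x₀ c n)ᶜ := by rw [Set.compl_iInter]
    show (P x₀ (pathsTo r x₀ x₀)).toReal = 1
    rw [hone]; simp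
  · -- minimality
    intro g hg0 hgR hg1 hgc x
    have hgsum : ∀ v : X, ∑ y ∈ (hr_fin v).toFinset, W y * g y = g v := fun v => by
      rw [← ruelle_eq_sum, hgR v]
    have hcont : ∀ δ : ℝ, 0 < δ → ∃ ε > 0, ∀ z : X, dist z x₀ < ε → 1 - δ ≤ g z := by
      intro δ hδ
      obtain ⟨ε, hε, hball⟩ := Metric.continuousAt_iff.mp hgc δ hδ
      refine ⟨ε, hε, fun z hz => ?_⟩
      have h2 := hball hz
      rw [hg1, Real.dist_eq] at h2
      have := abs_lt.mp h2
      linarith [this.1]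
    have hmain : ∀ δ : ℝ, 0 < δ → δ < 1 →
        (P x (pathsTo r x₀ x)).toReal ≤ g x / (1 - δ) := by
      intro δ hδ0 hδ1
      obtain ⟨ε, hε, hball⟩ := hcont δ hδ0
      set E : ℕ → X → Set (ℕ → X) :=
        fun n v => OmegaSet r v ∩ {w | w n ∈ Metric.ball x₀ ε} with hE
      have hEmem : ∀ (n : ℕ) (v : X), MeasurableSet[cylSA r v] (E n v) :=
        fun n v => coordSet_mem hr_fin v n _
      have hEmeas : ∀ (n : ℕ) (v : X), MeasurableSet (E n v) :=
        fun n v => cylSA_le hr_cont v _ (hEmem n v)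
      have key : ∀ (n : ℕ) (v : X), (1 - δ) * (P v (E n v)).toReal ≤ g v := by
        intro n
        induction n with
        | zero =>
          intro v
          set S : X → Set (ℕ → X) :=
            fun y => if y ∈ Metric.ball x₀ ε then OmegaSet r y else ∅ with hS
          have hSmem : ∀ y, r y = v → MeasurableSet[cylSA r y] (S y) := by
            intro y _
            by_cases hb : y ∈ Metric.ball x₀ ε
            · rw [hS]; simp only [if_pos hb]; exact omega_mem hr_fin y
            · rw [hS]; simp only [if_neg hb]; exact @MeasurableSet.empty _ (cylSA r y)
          have hset : E 0 v = ⋃ y ∈ r ⁻¹' {v}, ({w : ℕ → X | w 0 = y} ∩ shiftSeq ⁻¹' (S y)) := by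
            ext w
            constructor
            · rintro ⟨hw, hwb⟩
              have hw' : IsPathFrom r v w := hw
              have hwb' : w 0 ∈ Metric.ball x₀ ε := hwb
              refine Set.mem_biUnion (show w 0 ∈ r ⁻¹' {v} from hw'.1) ⟨rfl, ?_⟩
              show shiftSeq w ∈ S (w 0)
              rw [hS]; simp only [if_pos hwb']
              exact isPathFrom_shift hw'
            · intro hmem
              rw [Set.mem_iUnion₂] at hmem
              obtain ⟨y, hy, hw0, hSw⟩ := hmem
              by_cases hb : y ∈ Metric.ball x₀ ε
              · rw [hS] at hSw; simp only [if_pos hb] at hSw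
                refine ⟨isPathFrom_of_shift hy hw0 hSw, ?_⟩
                show w 0 ∈ Metric.ball x₀ ε
                rw [hw0]; exact hb
              · rw [hS] at hSw; simp only [if_neg hb] at hSw
                exact absurd hSw (Set.notMem_empty _)
          have hPS : ∀ y, r y = v → P y (S y)
              = if y ∈ Metric.ball x₀ ε then 1 else 0 := by
            intro y hy
            by_cases hb : y ∈ Metric.ball x₀ ε
            · rw [hS]; simp only [if_pos hb]; exact omega_meas_one hr_surj hP_cyl y
            · rw [hS]; simp only [if_neg hb]; exact measure_empty
          have hm : P v (E 0 v)
              = ∑ y ∈ (hr_fin v).toFinset, ENNReal.ofReal (W y) * P y (S y) := by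
            rw [hset]
            exact decomp hr_cont hr_surj hr_fin hP_prob hP_cyl v S hSmem
          have hm' : (P v (E 0 v)).toReal
              = ∑ y ∈ (hr_fin v).toFinset, W y * (if y ∈ Metric.ball x₀ ε then 1 else 0) := by
            rw [hm, ENNReal.toReal_sum
              (fun y _ => ENNReal.mul_ne_top ENNReal.ofReal_ne_top (measure_ne_top _ _))]
            refine Finset.sum_congr rfl fun y hy => ?_
            have hyv : r y = v := by simpa using (hr_fin v).mem_toFinset.mp hy
            rw [hPS y hyv]
            by_cases hb : y ∈ Metric.ball x₀ ε
            · simp [hb, ENNReal.toReal_ofReal (hW_nonneg y)]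
            · simp [hb]
          rw [hm', Finset.mul_sum]
          rw [← hgsum v]
          refine Finset.sum_le_sum fun y hy => ?_
          by_cases hb : y ∈ Metric.ball x₀ ε
          · simp only [if_pos hb, mul_one]
            have h2 := mul_le_mul_of_nonneg_left (hball y (Metric.mem_ball.mp hb)) (hW_nonneg y)
            linarith
          · simp only [if_neg hb, mul_zero]
            exact mul_nonneg (hW_nonneg y) (hg0 y)
        | succ n ih =>
          intro v
          have hset : E (n+1) v
              = ⋃ y ∈ r ⁻¹' {v}, ({w : ℕ → X | w 0 = y} ∩ shiftSeq ⁻¹' (E n y)) := by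
            ext w
            constructor
            · rintro ⟨hw, hwb⟩
              have hw' : IsPathFrom r v w := hw
              refine Set.mem_biUnion (show w 0 ∈ r ⁻¹' {v} from hw'.1)
                ⟨rfl, Set.mem_inter (isPathFrom_shift hw') ?_⟩
              show w (n+1) ∈ Metric.ball x₀ ε
              exact hwb
            · intro hmem
              rw [Set.mem_iUnion₂] at hmem
              obtain ⟨y, hy, hw0, hsp, hsb⟩ := hmem
              refine ⟨isPathFrom_of_shift hy hw0 hsp, ?_⟩
              exact hsb
          have hm : P v (E (n+1) v)
              = ∑ y ∈ (hr_fin v).toFinset, ENNReal.ofReal (W y) * P y (E n y) := by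
            rw [hset]
            exact decomp hr_cont hr_surj hr_fin hP_prob hP_cyl v _ (fun y _ => hEmem n y)
          rw [hm, ENNReal.toReal_sum
            (fun y _ => ENNReal.mul_ne_top ENNReal.ofReal_ne_top (measure_ne_top _ _)),
            Finset.mul_sum, ← hgsum v]
          refine Finset.sum_le_sum fun y hy => ?_
          rw [ENNReal.toReal_mul, ENNReal.toReal_ofReal (hW_nonneg y)]
          calc (1 - δ) * (W y * (P y (E n y)).toReal)
              = W y * ((1 - δ) * (P y (E n y)).toReal) := by ring
            _ ≤ W y * g y := mul_le_mul_of_nonneg_left (ih y) (hW_nonneg y)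
      -- conclude for this δ
      have hboundE : ∀ N : ℕ, P x (E N x) ≤ ENNReal.ofReal (g x / (1 - δ)) := by
        intro N
        have h1 : (P x (E N x)).toReal ≤ g x / (1 - δ) := by
          rw [le_div_iff₀ (by linarith)]
          calc (P x (E N x)).toReal * (1 - δ)
              = (1 - δ) * (P x (E N x)).toReal := mul_comm _ _
            _ ≤ g x := key N x
        calc P x (E N x) = ENNReal.ofReal ((P x (E N x)).toReal) :=
              (ENNReal.ofReal_toReal (measure_ne_top _ _)).symm
          _ ≤ _ := ENNReal.ofReal_le_ofReal h1
      have hsub : pathsTo r x₀ x ⊆ ⋃ N : ℕ, ⋂ n ∈ Set.Ici N, E n x := by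
        rintro w ⟨hw, ht⟩
        obtain ⟨N, hN⟩ := Metric.tendsto_atTop.mp ht ε hε
        refine Set.mem_iUnion.mpr ⟨N, ?_⟩
        rw [Set.mem_iInter₂]
        intro n hn
        exact ⟨hw, Metric.mem_ball.mpr (hN n hn)⟩
      have hmono : Monotone (fun N : ℕ => ⋂ n ∈ Set.Ici N, E n x) := by
        intro a b hab
        exact Set.biInter_subset_biInter_left (Set.Ici_subset_Ici.mpr hab)
      have hP1 : P x (pathsTo r x₀ x) ≤ ENNReal.ofReal (g x / (1 - δ)) := by
        calc P x (pathsTo r x₀ x) ≤ P x (⋃ N : ℕ, ⋂ n ∈ Set.Ici N, E n x) :=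
              measure_mono hsub
          _ = ⨆ N : ℕ, P x (⋂ n ∈ Set.Ici N, E n x) := hmono.directed_le.measure_iUnion
          _ ≤ ENNReal.ofReal (g x / (1 - δ)) := by
              refine iSup_le fun N => ?_
              refine le_trans (measure_mono ?_) (hboundE N)
              exact Set.biInter_subset_of_mem (Set.mem_Ici.mpr le_rfl)
      exact ENNReal.toReal_le_of_le_ofReal (div_nonneg (hg0 x) (by linarith)) hP1
    -- take δ → 0
    have hlim : Tendsto (fun k : ℕ => g x / (1 - 1/((k:ℝ)+2))) atTop (𝓝 (g x)) := by
      have h2 : Tendsto (fun k : ℕ => ((k:ℝ)+2)) atTop atTop :=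
        tendsto_atTop_add_const_right _ _ tendsto_natCast_atTop_atTop
      have t0 : Tendsto (fun k : ℕ => 1/((k:ℝ)+2)) atTop (𝓝 0) := by
        simpa [one_div, Pi.inv_def] using h2.inv_tendsto_atTop
      have t1 : Tendsto (fun k : ℕ => 1 - 1/((k:ℝ)+2)) atTop (𝓝 (1 - 0)) :=
        tendsto_const_nhds.sub t0
      have : Tendsto (fun k : ℕ => g x / (1 - 1/((k:ℝ)+2))) atTop (𝓝 (g x / (1 - 0))) := Tendsto.div (tendsto_const_nhds (x := g x) (f := atTop)) t1 (by norm_num)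
      simpa using this
    refine ge_of_tendsto hlim (Filter.Eventually.of_forall fun k => ?_)
    have hk0 : (0:ℝ) < 1/((k:ℝ)+2) := by positivity
    have hk1 : 1/((k:ℝ)+2) < 1 := by
      rw [div_lt_one (by positivity)]
      have : (0:ℝ) ≤ (k:ℝ) := Nat.cast_nonneg k
      linarith
    exact hmain _ hk0 hk1
end

section
/- Let B and L be finite subsets of ℝ^d with #B = #L = N, let S be an invertible real d×d matrix, and suppose the N×N matrix (1/√N)(e^{2πi b·S⁻¹l})_{b∈B, l∈L} is unitary. Define m_B(x) = (1/√N) ∑_{b∈B} e^{2πi b·x}. Then ∑_{l∈L} |m_B(S⁻¹(x+l))|² = N for every x ∈ ℝ^d; equivalently, with W_B = |m_B|²/N and τ_l(x) = S⁻¹(x+l), one has ∑_{l∈L} W_B(τ_l x) = 1 for all x ∈ ℝ^d. -/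
open MeasureTheory Filter Topology Matrix Complex

/-- `m_B(x) = (1/√N) ∑_{b ∈ B} e^{2πi b·x}`. -/
noncomputable def mB {d : ℕ} (B : Finset (Fin d → ℝ)) (x : Fin d → ℝ) : ℂ :=
  (1 / Real.sqrt B.card : ℝ) *
    ∑ b ∈ B, Complex.exp (2 * Real.pi * Complex.I * (b ⬝ᵥ x : ℝ))

/-- The matrix `(1/√N)(e^{2πi b·S⁻¹l})_{b ∈ B, l ∈ L}`. -/
noncomputable def hadamardMatrix {d : ℕ} (B L : Finset (Fin d → ℝ)) (N : ℕ)
    (S : Matrix (Fin d) (Fin d) ℝ) : Matrix ↥B ↥L ℂ :=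
  Matrix.of fun (b : ↥B) (l : ↥L) =>
    ((1 / Real.sqrt N : ℝ) : ℂ) *
      Complex.exp (2 * Real.pi * Complex.I *
        ((b : Fin d → ℝ) ⬝ᵥ S⁻¹.mulVec (l : Fin d → ℝ) : ℝ))

theorem stmt18
    {d : ℕ} (B L : Finset (Fin d → ℝ)) (N : ℕ) (hN : 0 < N)
    (hB_card : B.card = N) (hL_card : L.card = N)
    -- `S` is an invertible real `d × d` matrix
    (S : Matrix (Fin d) (Fin d) ℝ) (hS : IsUnit S.det)
    -- the matrix `(1/√N)(e^{2πi b·S⁻¹l})_{b ∈ B, l ∈ L}` is unitary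
    (hHada : (hadamardMatrix B L N S)ᴴ * hadamardMatrix B L N S = 1) :
    -- then `∑_{l ∈ L} |m_B(S⁻¹(x+l))|² = N`,
    (∀ x : Fin d → ℝ,
      (∑ l ∈ L, ‖mB B (S⁻¹.mulVec (x + l))‖ ^ 2) = N) ∧
    -- equivalently `∑_{l ∈ L} W_B(τ_l x) = 1` with `W_B = |m_B|²/N`, `τ_l x = S⁻¹(x+l)`
    (∀ x : Fin d → ℝ,
      (∑ l ∈ L, ‖mB B (S⁻¹.mulVec (x + l))‖ ^ 2 / N) = 1) := by
  have key : ∀ x : Fin d → ℝ,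
      (∑ l ∈ L, ‖mB B (S⁻¹.mulVec (x + l))‖ ^ 2) = N := by
    intro x
    set H : Matrix ↥B ↥L ℂ := hadamardMatrix B L N S with hHdef
    have e : (↥L) ≃ (↥B) := Fintype.equivOfCardEq (by simp [hL_card, hB_card])
    have hHH : H * Hᴴ = 1 := (Matrix.mul_eq_one_comm_of_equiv e.symm).mpr hHada
    set v : ↥B → ℂ := fun b =>
      Complex.exp (2 * Real.pi * Complex.I * ((b : Fin d → ℝ) ⬝ᵥ S⁻¹.mulVec x : ℝ)) with hv
    set w : ↥L → ℂ := v ᵥ* H with hw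
    -- the key pointwise identity
    have hmB : ∀ l : ↥L, mB B (S⁻¹.mulVec (x + (l : Fin d → ℝ))) = w l := by
      intro l
      have : w l = ∑ b : ↥B, v b * H b l := rfl
      rw [this]
      have hrw : ∀ b : ↥B, v b * H b l =
          ((1 / Real.sqrt N : ℝ) : ℂ) *
            Complex.exp (2 * Real.pi * Complex.I *
              ((b : Fin d → ℝ) ⬝ᵥ S⁻¹.mulVec (x + (l : Fin d → ℝ)) : ℝ)) := by
        intro b
        have hdot : ((b : Fin d → ℝ) ⬝ᵥ S⁻¹.mulVec (x + (l : Fin d → ℝ)) : ℝ)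
            = ((b : Fin d → ℝ) ⬝ᵥ S⁻¹.mulVec x : ℝ)
              + ((b : Fin d → ℝ) ⬝ᵥ S⁻¹.mulVec (l : Fin d → ℝ) : ℝ) := by
          rw [Matrix.mulVec_add, dotProduct_add]
        simp only [hv, hHdef, hadamardMatrix, Matrix.of_apply, hdot]
        push_cast
        rw [mul_add, Complex.exp_add]
        ring
      rw [Finset.sum_congr rfl (fun b _ => hrw b), ← Finset.mul_sum]
      unfold mB
      rw [hB_card]
      congr 1
      exact (Finset.sum_coe_sort B (fun b => Complex.exp (2 * Real.pi * Complex.I *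
        ((b : Fin d → ℝ) ⬝ᵥ S⁻¹.mulVec (x + (l : Fin d → ℝ)) : ℝ)))).symm
    -- |v b| = 1
    have hvb : ∀ b : ↥B, v b * (starRingEnd ℂ) (v b) = 1 := by
      intro b
      rw [hv, ← Complex.exp_conj]
      rw [← Complex.exp_add]
      have : (starRingEnd ℂ) (2 * Real.pi * Complex.I *
          ((b : Fin d → ℝ) ⬝ᵥ S⁻¹.mulVec x : ℝ)) =
          -(2 * Real.pi * Complex.I * ((b : Fin d → ℝ) ⬝ᵥ S⁻¹.mulVec x : ℝ)) := by
        simp only [_root_.map_mul, Complex.conj_I, Complex.conj_ofReal, map_ofNat]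
        ring
      rw [this, add_neg_cancel, Complex.exp_zero]
    -- complex identity
    have hC : ∑ l : ↥L, w l * (starRingEnd ℂ) (w l) = (N : ℂ) := by
      have h1 : ∑ l : ↥L, w l * (starRingEnd ℂ) (w l) = w ⬝ᵥ star w := rfl
      rw [h1, hw, Matrix.star_vecMul, Matrix.dotProduct_mulVec, Matrix.vecMul_vecMul,
        hHH, Matrix.vecMul_one]
      have : v ⬝ᵥ star v = ∑ b : ↥B, v b * (starRingEnd ℂ) (v b) := rfl
      rw [this, Finset.sum_congr rfl (fun b _ => hvb b), Finset.sum_const]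
      simp [hB_card]
    -- pass to reals
    have hR : ∑ l : ↥L, ‖w l‖ ^ 2 = (N : ℝ) := by
      have : ∑ l : ↥L, ((‖w l‖ ^ 2 : ℝ) : ℂ) = (N : ℂ) := by
        rw [← hC]
        refine Finset.sum_congr rfl fun l _ => ?_
        rw [Complex.mul_conj]
        norm_cast
        exact Complex.sq_norm _
      exact_mod_cast (by push_cast at this ⊢; exact_mod_cast this)
    rw [← hR, ← Finset.sum_coe_sort L
      (fun l => ‖mB B (S⁻¹.mulVec (x + l))‖ ^ 2)]
    exact Finset.sum_congr rfl fun l _ => by rw [hmB l]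
  refine ⟨key, fun x => ?_⟩
  rw [← Finset.sum_div, key x, div_self (by exact_mod_cast hN.ne')]
end
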